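/- Every triangle-free graph on at most 8 vertices is (2,1)-colourable, i.e., its vertex set can be partitioned into two sets each inducing a subgraph of maximum degree at most 1. -/

import Mathlib

open SimpleGraph

/-- A set `U` is `k`-independent in `G` if every vertex of `U` has at most `k`
neighbours inside `U` (i.e. the induced subgraph has maximum degree at most `k`). -/
def KIndep {V : Type*} (G : SimpleGraph V) (k : ℕ) (U : Set V) : Prop :=
  ∀ v ∈ U, {w | w ∈ U ∧ G.Adj v w}.ncard ≤ k

/-- `G` is `(m,k)`-colourable: the vertices can be coloured with `m` colours so that
every colour class is `k`-independent. -/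
def DefColorable {V : Type*} (G : SimpleGraph V) (m k : ℕ) : Prop :=
  ∃ c : V → Fin m, ∀ i : Fin m, KIndep G k {v | c v = i}

/-- The `k`-defective chromatic number: the least `m` such that `G` is `(m,k)`-colourable. -/
noncomputable def defChrom {V : Type*} (G : SimpleGraph V) (k : ℕ) : ℕ :=
  sInf {m | DefColorable G m k}

open Finset

section Helpers
variable {V : Type*}

lemma kindep_of_good (G : SimpleGraph V) {U : Set V}
    (h : ∀ x ∈ U, ∀ w1 ∈ U, ∀ w2 ∈ U, G.Adj x w1 → G.Adj x w2 → w1 = w2) :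
    KIndep G 1 U := by
  intro v hv
  have hs : {w | w ∈ U ∧ G.Adj v w}.Subsingleton := fun a ha b hb =>
    h v hv a ha.1 b hb.1 ha.2 hb.2
  rcases hs.eq_empty_or_singleton with h' | ⟨x, h'⟩ <;> simp [h']

lemma defcol_of_set (G : SimpleGraph V) (A : Set V)
    (h1 : KIndep G 1 A) (h2 : KIndep G 1 Aᶜ) : DefColorable G 2 1 := by
  classical
  refine ⟨fun x => if x ∈ A then 0 else 1, fun i => ?_⟩
  fin_cases i
  · have e : {v | (if v ∈ A then (0:Fin 2) else 1) = 0} = A := by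
      ext x; by_cases hx : x ∈ A <;> simp [hx]
    simpa [e] using h1
  · have e : {v | (if v ∈ A then (0:Fin 2) else 1) = 1} = Aᶜ := by
      ext x; by_cases hx : x ∈ A <;> simp [hx]
    simpa [e, Set.compl_def] using h2

lemma tri_free {G : SimpleGraph V} (hG : G.CliqueFree 3) {a b c : V}
    (hab : G.Adj a b) (hac : G.Adj a c) (hbc : G.Adj b c) : False := by
  classical
  exact hG {a, b, c} (is3Clique_triple_iff.mpr ⟨hab, hac, hbc⟩)

end Helpers

section Weight
variable {V : Type*} [Fintype V] [DecidableEq V] (G : SimpleGraph V) [DecidableRel G.Adj]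

def sameN (c : V → Fin 2) (v : V) : ℕ := (univ.filter fun w => G.Adj v w ∧ c w = c v).card
def diffN (c : V → Fin 2) (v : V) : ℕ := (univ.filter fun w => G.Adj v w ∧ c w ≠ c v).card
def Wt (c : V → Fin 2) : ℕ := (univ.filter fun p : V × V => G.Adj p.1 p.2 ∧ c p.1 = c p.2).card
def Waway (c : V → Fin 2) (v : V) : ℕ :=
  (univ.filter fun p : V × V => (G.Adj p.1 p.2 ∧ c p.1 = c p.2) ∧ p.1 ≠ v ∧ p.2 ≠ v).card

lemma Wt_split (c : V → Fin 2) (v : V) :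
    Wt G c = sameN G c v + sameN G c v + Waway G c v := by
  have key : (univ.filter fun p : V × V => G.Adj p.1 p.2 ∧ c p.1 = c p.2) =
      ((univ.filter fun w => G.Adj v w ∧ c w = c v).image (fun w => (v, w))) ∪
      ((univ.filter fun w => G.Adj v w ∧ c w = c v).image (fun w => (w, v))) ∪
      (univ.filter fun p : V × V => (G.Adj p.1 p.2 ∧ c p.1 = c p.2) ∧ p.1 ≠ v ∧ p.2 ≠ v) := by
    ext ⟨p1, p2⟩
    simp only [mem_filter, mem_union, mem_image, mem_univ, true_and, Prod.mk.injEq]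
    constructor
    · rintro ⟨hadj, hc⟩
      by_cases h1 : p1 = v
      · subst h1; exact Or.inl (Or.inl ⟨p2, ⟨hadj, hc.symm⟩, rfl, rfl⟩)
      by_cases h2 : p2 = v
      · subst h2
        exact Or.inl (Or.inr ⟨p1, ⟨hadj.symm, hc⟩, rfl, rfl⟩)
      · exact Or.inr ⟨⟨hadj, hc⟩, h1, h2⟩
    · rintro ((⟨w, ⟨hadj, hc⟩, rfl, rfl⟩ | ⟨w, ⟨hadj, hc⟩, rfl, rfl⟩) | ⟨h, -⟩)
      · exact ⟨hadj, hc.symm⟩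
      · exact ⟨hadj.symm, hc⟩
      · exact h
  have hinj1 : Function.Injective (fun w : V => (v, w)) := fun a b h => by
    simpa using congrArg Prod.snd h
  have hinj2 : Function.Injective (fun w : V => (w, v)) := fun a b h => by
    simpa using congrArg Prod.fst h
  have d12 : Disjoint ((univ.filter fun w => G.Adj v w ∧ c w = c v).image (fun w => (v, w)))
      ((univ.filter fun w => G.Adj v w ∧ c w = c v).image (fun w => (w, v))) := by
    rw [Finset.disjoint_left]
    rintro ⟨p1, p2⟩ h1 h2
    simp only [mem_image, mem_filter, mem_univ, true_and, Prod.mk.injEq] at h1 h2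
    obtain ⟨w, ⟨hadj, -⟩, rfl, rfl⟩ := h1
    obtain ⟨w', ⟨hadj', -⟩, h, rfl⟩ := h2
    subst h
    exact G.irrefl hadj
  have d3 : Disjoint (((univ.filter fun w => G.Adj v w ∧ c w = c v).image (fun w => (v, w))) ∪
      ((univ.filter fun w => G.Adj v w ∧ c w = c v).image (fun w => (w, v))))
      (univ.filter fun p : V × V => (G.Adj p.1 p.2 ∧ c p.1 = c p.2) ∧ p.1 ≠ v ∧ p.2 ≠ v) := by
    rw [Finset.disjoint_left]
    rintro ⟨p1, p2⟩ h1 h2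
    simp only [mem_image, mem_filter, mem_univ, true_and, mem_union, Prod.mk.injEq] at h1 h2
    rcases h1 with ⟨w, -, rfl, rfl⟩ | ⟨w, -, rfl, rfl⟩
    · exact h2.2.1 rfl
    · exact h2.2.2 rfl
  rw [Wt, key, card_union_of_disjoint d3, card_union_of_disjoint d12,
    Finset.card_image_of_injective _ hinj1, Finset.card_image_of_injective _ hinj2]
  rfl

lemma Waway_update (c : V → Fin 2) (v : V) :
    Waway G (Function.update c v (c v + 1)) v = Waway G c v := by
  unfold Waway
  congr 1
  apply Finset.filter_congr
  rintro ⟨p1, p2⟩ -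
  by_cases h1 : p1 = v
  · simp [h1]
  by_cases h2 : p2 = v
  · simp [h2]
  · simp [Function.update_of_ne h1, Function.update_of_ne h2, h1, h2]

lemma sameN_update (c : V → Fin 2) (v : V) :
    sameN G (Function.update c v (c v + 1)) v = diffN G c v := by
  have fin2 : ∀ x y : Fin 2, (y = x + 1) ↔ ¬ y = x := by decide
  unfold sameN diffN
  congr 1
  apply Finset.filter_congr
  intro w _
  by_cases hw : w = v
  · subst hw; simp
  · simp [Function.update_of_ne hw, Function.update_self, fin2]

set_option linter.unusedSectionVars false in
lemma sameN_add_diffN (c : V → Fin 2) (v : V) :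
    sameN G c v + diffN G c v = G.degree v := by
  have := Finset.card_filter_add_card_filter_not
    (s := univ.filter fun w => G.Adj v w) (p := fun w => c w = c v)
  rw [Finset.filter_filter, Finset.filter_filter] at this
  rw [← G.card_neighborFinset_eq_degree, neighborFinset_eq_filter]
  unfold sameN diffN
  convert this using 3 <;> rfl

lemma exists_good_col (hdeg : ∀ v, G.degree v ≤ 3) :
    ∃ c : V → Fin 2, ∀ v, sameN G c v ≤ 1 := by
  obtain ⟨c, -, hmin⟩ := Finset.exists_min_image (univ : Finset (V → Fin 2)) (Wt G)
    ⟨fun _ => 0, mem_univ _⟩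
  refine ⟨c, fun v => ?_⟩
  by_contra hs
  push_neg at hs
  have hd : diffN G c v < sameN G c v := by
    have h1 := sameN_add_diffN G c v
    have := hdeg v
    omega
  have hlt : Wt G (Function.update c v (c v + 1)) < Wt G c := by
    rw [Wt_split G c v, Wt_split G (Function.update c v (c v + 1)) v,
      sameN_update, Waway_update]
    omega
  exact absurd (hmin _ (mem_univ _)) (not_le.mpr hlt)

end Weight


set_option maxHeartbeats 1000000 in
/-- Every triangle-free graph on at most 8 vertices is (2,1)-colourable. -/
theorem stmt7 {V : Type*} [Fintype V] (G : SimpleGraph V)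
    (hcard : Fintype.card V ≤ 8) (hG : G.CliqueFree 3) :
    DefColorable G 2 1 := by
  classical
  by_cases hdeg : ∀ u, G.degree u ≤ 3
  · -- max degree ≤ 3 case
    obtain ⟨c, hc⟩ := exists_good_col G hdeg
    refine ⟨c, fun i => ?_⟩
    intro v hv
    simp only [Set.mem_setOf_eq] at hv
    subst hv
    have e : {w | w ∈ {v' | c v' = c v} ∧ G.Adj v w} =
        ↑(univ.filter fun w => G.Adj v w ∧ c w = c v) := by
      ext w
      simp [Set.mem_setOf_eq, and_comm]
    rw [e, Set.ncard_coe_finset]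
    exact hc v
  · push_neg at hdeg
    obtain ⟨v, hv4⟩ := hdeg
    set N := G.neighborFinset v with hN
    have hmemN : ∀ x, x ∈ N ↔ G.Adj v x := fun x => G.mem_neighborFinset v x
    have hNind : ∀ x ∈ N, ∀ y ∈ N, ¬ G.Adj x y := by
      intro x hx y hy hxy
      exact tri_free hG ((hmemN x).mp hx) ((hmemN y).mp hy) hxy
    have hvN : v ∉ N := by simp [hmemN]
    set R := (univ : Finset V) \ insert v N with hR
    have hmemR : ∀ x, x ∈ R ↔ x ≠ v ∧ ¬ G.Adj v x := by
      intro x; simp [hR, hmemN]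
    have hcards : R.card + (N.card + 1) = Fintype.card V := by
      have hsub : insert v N ⊆ univ := subset_univ _
      rw [hR, card_sdiff_of_subset hsub, card_insert_of_notMem hvN, card_univ]
      have : N.card + 1 ≤ Fintype.card V := by
        rw [← card_insert_of_notMem hvN, ← card_univ]
        exact card_le_card hsub
      omega
    have hNc : N.card = G.degree v := G.card_neighborFinset_eq_degree v
    have hRcard : R.card ≤ 3 := by omega
    by_cases hB : ∃ m ∈ R, ∃ a ∈ R, ∃ b ∈ R, a ≠ b ∧ G.Adj m a ∧ G.Adj m b
    · obtain ⟨m, hmR, a, haR, b, hbR, hab', hma, hmb⟩ := hB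
      have hmv := (hmemR m).mp hmR
      have hav := (hmemR a).mp haR
      have hbv := (hmemR b).mp hbR
      have hab : ¬ G.Adj a b := fun h => tri_free hG hma hmb h
      have hmab : m ≠ a := G.ne_of_adj hma
      have hmb' : m ≠ b := G.ne_of_adj hmb
      have hRset : R = {m, a, b} := by
        refine (eq_of_subset_of_card_le ?_ ?_).symm
        · intro x hx
          simp only [mem_insert, mem_singleton] at hx
          rcases hx with rfl | rfl | rfl <;> assumption
        · have : ({m, a, b} : Finset V).card = 3 := by
            rw [card_insert_of_notMem (by simp [hmab, hmb']),
              card_insert_of_notMem (by simp [hab']), card_singleton]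
          omega
      have hpart : ∀ x : V, x = v ∨ x ∈ N ∨ x = m ∨ x = a ∨ x = b := by
        intro x
        by_cases hx : x ∈ insert v N
        · simp only [mem_insert] at hx
          tauto
        · have : x ∈ R := by simp [hR, hx]
          rw [hRset] at this
          simp only [mem_insert, mem_singleton] at this
          tauto
      have pickm : ∀ y : V, y ∉ N → y ≠ m → y = v ∨ y = a ∨ y = b := by
        intro y hy1 hy2
        rcases hpart y with h | h | h | h | h
        · exact Or.inl h
        · exact absurd h hy1
        · exact absurd h hy2
        · exact Or.inr (Or.inl h)
        · exact Or.inr (Or.inr h)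
      have picka : ∀ y : V, y ∉ N → y ≠ a → y = v ∨ y = m ∨ y = b := by
        intro y hy1 hy2
        rcases hpart y with h | h | h | h | h
        · exact Or.inl h
        · exact absurd h hy1
        · exact Or.inr (Or.inl h)
        · exact absurd h hy2
        · exact Or.inr (Or.inr h)
      have pickb : ∀ y : V, y ∉ N → y ≠ b → y = v ∨ y = m ∨ y = a := by
        intro y hy1 hy2
        rcases hpart y with h | h | h | h | h
        · exact Or.inl h
        · exact absurd h hy1
        · exact Or.inr (Or.inl h)
        · exact Or.inr (Or.inr h)
        · exact absurd h hy2
      have hR3 : R.card = 3 := by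
        rw [hRset, card_insert_of_notMem (by simp [hmab, hmb']),
          card_insert_of_notMem (by simp [hab']), card_singleton]
      have hN4 : N.card = 4 := by omega
      set S := N.filter (fun w => G.Adj m w) with hS
      set Sa := N.filter (fun w => G.Adj a w) with hSa
      set Sb := N.filter (fun w => G.Adj b w) with hSb
      by_cases hS1 : S.card ≤ 1
      · -- class1 = N ∪ {m}
        apply defcol_of_set G (↑N ∪ {m})
        · apply kindep_of_good
          intro x hx w1 h1 w2 h2 a1 a2
          simp only [Set.mem_union, Finset.mem_coe, Set.mem_singleton_iff] at hx h1 h2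
          rcases hx with hx | rfl
          · rcases h1 with h1 | rfl
            · exact absurd a1 (hNind x hx w1 h1)
            · rcases h2 with h2 | rfl
              · exact absurd a2 (hNind x hx w2 h2)
              · rfl
          · have e1 : w1 ∈ S := by
              rcases h1 with h1 | rfl
              · exact mem_filter.mpr ⟨h1, a1⟩
              · exact absurd a1 G.irrefl
            have e2 : w2 ∈ S := by
              rcases h2 with h2 | rfl
              · exact mem_filter.mpr ⟨h2, a2⟩
              · exact absurd a2 G.irrefl
            exact Finset.card_le_one.mp hS1 w1 e1 w2 e2
        · apply kindep_of_good
          intro x hx w1 h1 w2 h2 a1 a2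
          simp only [Set.mem_compl_iff, Set.mem_union, Finset.mem_coe,
            Set.mem_singleton_iff, not_or] at hx h1 h2
          have hx' : x = v ∨ x = a ∨ x = b := pickm x hx.1 hx.2
          have hw1 : w1 = v ∨ w1 = a ∨ w1 = b := pickm w1 h1.1 h1.2
          rcases hx' with rfl | rfl | rfl
          · rcases hw1 with rfl | rfl | rfl
            · exact absurd a1 G.irrefl
            · exact absurd a1 hav.2
            · exact absurd a1 hbv.2
          · rcases hw1 with rfl | rfl | rfl
            · exact absurd a1.symm hav.2
            · exact absurd a1 G.irrefl
            · exact absurd a1 hab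
          · rcases hw1 with rfl | rfl | rfl
            · exact absurd a1.symm hbv.2
            · exact absurd a1 (fun h => hab h.symm)
            · exact absurd a1 G.irrefl
      · by_cases hSa1 : Sa.card ≤ 1
        · -- class1 = N ∪ {a}, class2 = {v, m, b}
          apply defcol_of_set G (↑N ∪ {a})
          · apply kindep_of_good
            intro x hx w1 h1 w2 h2 a1 a2
            simp only [Set.mem_union, Finset.mem_coe, Set.mem_singleton_iff] at hx h1 h2
            rcases hx with hx | rfl
            · rcases h1 with h1 | rfl
              · exact absurd a1 (hNind x hx w1 h1)
              · rcases h2 with h2 | rfl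
                · exact absurd a2 (hNind x hx w2 h2)
                · rfl
            · have e1 : w1 ∈ Sa := by
                rcases h1 with h1 | rfl
                · exact mem_filter.mpr ⟨h1, a1⟩
                · exact absurd a1 G.irrefl
              have e2 : w2 ∈ Sa := by
                rcases h2 with h2 | rfl
                · exact mem_filter.mpr ⟨h2, a2⟩
                · exact absurd a2 G.irrefl
              exact Finset.card_le_one.mp hSa1 w1 e1 w2 e2
          · apply kindep_of_good
            intro x hx w1 h1 w2 h2 a1 a2
            simp only [Set.mem_compl_iff, Set.mem_union, Finset.mem_coe,
              Set.mem_singleton_iff, not_or] at hx h1 h2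
            have hx' : x = v ∨ x = m ∨ x = b := picka x hx.1 hx.2
            have hw1 : w1 = v ∨ w1 = m ∨ w1 = b := picka w1 h1.1 h1.2
            have hw2 : w2 = v ∨ w2 = m ∨ w2 = b := picka w2 h2.1 h2.2
            rcases hx' with rfl | rfl | rfl
            · rcases hw1 with rfl | rfl | rfl
              · exact absurd a1 G.irrefl
              · exact absurd a1 hmv.2
              · exact absurd a1 hbv.2
            · have e1 : w1 = b := by
                rcases hw1 with rfl | rfl | rfl
                · exact absurd a1.symm hmv.2
                · exact absurd a1 G.irrefl
                · rfl
              have e2 : w2 = b := by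
                rcases hw2 with rfl | rfl | rfl
                · exact absurd a2.symm hmv.2
                · exact absurd a2 G.irrefl
                · rfl
              rw [e1, e2]
            · have e1 : w1 = m := by
                rcases hw1 with rfl | rfl | rfl
                · exact absurd a1.symm hbv.2
                · rfl
                · exact absurd a1 G.irrefl
              have e2 : w2 = m := by
                rcases hw2 with rfl | rfl | rfl
                · exact absurd a2.symm hbv.2
                · rfl
                · exact absurd a2 G.irrefl
              rw [e1, e2]
        · by_cases hSb1 : Sb.card ≤ 1
          · -- class1 = N ∪ {b}, class2 = {v, m, a}
            apply defcol_of_set G (↑N ∪ {b})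
            · apply kindep_of_good
              intro x hx w1 h1 w2 h2 a1 a2
              simp only [Set.mem_union, Finset.mem_coe, Set.mem_singleton_iff] at hx h1 h2
              rcases hx with hx | rfl
              · rcases h1 with h1 | rfl
                · exact absurd a1 (hNind x hx w1 h1)
                · rcases h2 with h2 | rfl
                  · exact absurd a2 (hNind x hx w2 h2)
                  · rfl
              · have e1 : w1 ∈ Sb := by
                  rcases h1 with h1 | rfl
                  · exact mem_filter.mpr ⟨h1, a1⟩
                  · exact absurd a1 G.irrefl
                have e2 : w2 ∈ Sb := by
                  rcases h2 with h2 | rfl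
                  · exact mem_filter.mpr ⟨h2, a2⟩
                  · exact absurd a2 G.irrefl
                exact Finset.card_le_one.mp hSb1 w1 e1 w2 e2
            · apply kindep_of_good
              intro x hx w1 h1 w2 h2 a1 a2
              simp only [Set.mem_compl_iff, Set.mem_union, Finset.mem_coe,
                Set.mem_singleton_iff, not_or] at hx h1 h2
              have hx' : x = v ∨ x = m ∨ x = a := pickb x hx.1 hx.2
              have hw1 : w1 = v ∨ w1 = m ∨ w1 = a := pickb w1 h1.1 h1.2
              have hw2 : w2 = v ∨ w2 = m ∨ w2 = a := pickb w2 h2.1 h2.2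
              rcases hx' with rfl | rfl | rfl
              · rcases hw1 with rfl | rfl | rfl
                · exact absurd a1 G.irrefl
                · exact absurd a1 hmv.2
                · exact absurd a1 hav.2
              · have e1 : w1 = a := by
                  rcases hw1 with rfl | rfl | rfl
                  · exact absurd a1.symm hmv.2
                  · exact absurd a1 G.irrefl
                  · rfl
                have e2 : w2 = a := by
                  rcases hw2 with rfl | rfl | rfl
                  · exact absurd a2.symm hmv.2
                  · exact absurd a2 G.irrefl
                  · rfl
                rw [e1, e2]
              · have e1 : w1 = m := by
                  rcases hw1 with rfl | rfl | rfl
                  · exact absurd a1.symm hav.2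
                  · rfl
                  · exact absurd a1 G.irrefl
                have e2 : w2 = m := by
                  rcases hw2 with rfl | rfl | rfl
                  · exact absurd a2.symm hav.2
                  · rfl
                  · exact absurd a2 G.irrefl
                rw [e1, e2]
          · -- hardest case: |S| ≥ 2, |Sa| ≥ 2, |Sb| ≥ 2
            push_neg at hS1 hSa1 hSb1
            have hSaS : Sa ⊆ N \ S := by
              intro x hx
              rw [hSa, mem_filter] at hx
              rw [mem_sdiff]
              refine ⟨hx.1, fun hxS => ?_⟩
              rw [hS, mem_filter] at hxS
              exact tri_free hG hma hxS.2 hx.2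
            have hSsubN : S ⊆ N := filter_subset _ _
            have hScard : S.card = 2 := by
              have h1 : Sa.card ≤ N.card - S.card := by
                rw [← card_sdiff_of_subset hSsubN]
                exact card_le_card hSaS
              have h2 : S.card ≤ N.card := card_le_card hSsubN
              omega
            obtain ⟨x1, hx1S, x2, hx2S, hx12⟩ := Finset.one_lt_card.mp
              (by omega : 1 < S.card)
            have hSeq : S = {x1, x2} := by
              refine (eq_of_subset_of_card_le ?_ ?_).symm
              · intro x hx
                simp only [mem_insert, mem_singleton] at hx
                rcases hx with rfl | rfl <;> assumption
              · rw [card_insert_of_notMem (by simp [hx12]), card_singleton]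
                omega
            have hx2N : x2 ∈ N := hSsubN hx2S
            have hvx2 : G.Adj v x2 := (hmemN x2).mp hx2N
            have hmx2 : G.Adj m x2 := (mem_filter.mp hx2S).2
            have hax2 : ¬ G.Adj a x2 := fun h => tri_free hG hma hmx2 h
            have hbx2 : ¬ G.Adj b x2 := fun h => tri_free hG hmb hmx2 h
            -- class A = {v, x2, a, b}
            apply defcol_of_set G ({v, x2, a, b} : Set V)
            · apply kindep_of_good
              intro x hx w1 h1 w2 h2 a1 a2
              simp only [Set.mem_insert_iff, Set.mem_singleton_iff] at hx h1 h2
              rcases hx with rfl | rfl | rfl | rfl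
              · have e1 : w1 = x2 := by
                  rcases h1 with rfl | rfl | rfl | rfl
                  · exact absurd a1 G.irrefl
                  · rfl
                  · exact absurd a1 hav.2
                  · exact absurd a1 hbv.2
                have e2 : w2 = x2 := by
                  rcases h2 with rfl | rfl | rfl | rfl
                  · exact absurd a2 G.irrefl
                  · rfl
                  · exact absurd a2 hav.2
                  · exact absurd a2 hbv.2
                rw [e1, e2]
              · have e1 : w1 = v := by
                  rcases h1 with rfl | rfl | rfl | rfl
                  · rfl
                  · exact absurd a1 G.irrefl
                  · exact absurd a1 (fun h => hax2 h.symm)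
                  · exact absurd a1 (fun h => hbx2 h.symm)
                have e2 : w2 = v := by
                  rcases h2 with rfl | rfl | rfl | rfl
                  · rfl
                  · exact absurd a2 G.irrefl
                  · exact absurd a2 (fun h => hax2 h.symm)
                  · exact absurd a2 (fun h => hbx2 h.symm)
                rw [e1, e2]
              · exfalso
                rcases h1 with rfl | rfl | rfl | rfl
                · exact hav.2 a1.symm
                · exact hax2 a1
                · exact G.irrefl a1
                · exact hab a1
              · exfalso
                rcases h1 with rfl | rfl | rfl | rfl
                · exact hbv.2 a1.symm
                · exact hbx2 a1
                · exact hab a1.symm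
                · exact G.irrefl a1
            · apply kindep_of_good
              intro x hx w1 h1 w2 h2 a1 a2
              simp only [Set.mem_compl_iff, Set.mem_insert_iff,
                Set.mem_singleton_iff, not_or] at hx h1 h2
              have place : ∀ y : V, y ≠ v → y ≠ x2 → y ≠ a → y ≠ b →
                  y = m ∨ (y ∈ N ∧ y ≠ x2) := by
                intro y e1 e2 e3 e4
                rcases hpart y with h | h | h | h | h
                · exact absurd h e1
                · exact Or.inr ⟨h, e2⟩
                · exact Or.inl h
                · exact absurd h e3
                · exact absurd h e4
              have hx' := place x hx.1 hx.2.1 hx.2.2.1 hx.2.2.2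
              have hw1 := place w1 h1.1 h1.2.1 h1.2.2.1 h1.2.2.2
              have hw2 := place w2 h2.1 h2.2.1 h2.2.2.1 h2.2.2.2
              rcases hx' with rfl | ⟨hxN, hxx2⟩
              · have e1 : w1 = x1 := by
                  rcases hw1 with rfl | ⟨hw1N, hw1x2⟩
                  · exact absurd a1 G.irrefl
                  · have : w1 ∈ S := mem_filter.mpr ⟨hw1N, a1⟩
                    rw [hSeq] at this
                    simp only [mem_insert, mem_singleton] at this
                    tauto
                have e2 : w2 = x1 := by
                  rcases hw2 with rfl | ⟨hw2N, hw2x2⟩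
                  · exact absurd a2 G.irrefl
                  · have : w2 ∈ S := mem_filter.mpr ⟨hw2N, a2⟩
                    rw [hSeq] at this
                    simp only [mem_insert, mem_singleton] at this
                    tauto
                rw [e1, e2]
              · have e1 : w1 = m := by
                  rcases hw1 with rfl | ⟨hw1N, -⟩
                  · rfl
                  · exact absurd a1 (hNind x hxN w1 hw1N)
                have e2 : w2 = m := by
                  rcases hw2 with rfl | ⟨hw2N, -⟩
                  · rfl
                  · exact absurd a2 (hNind x hxN w2 hw2N)
                rw [e1, e2]
    · -- R has max internal degree ≤ 1 : classes are N and {v} ∪ R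
      push_neg at hB
      apply defcol_of_set G (↑N : Set V)
      · apply kindep_of_good
        intro x hx w1 h1 w2 h2 a1 a2
        simp only [Finset.mem_coe] at hx h1
        exact absurd a1 (hNind x hx w1 h1)
      · apply kindep_of_good
        intro x hx w1 h1 w2 h2 a1 a2
        simp only [Set.mem_compl_iff, Finset.mem_coe] at hx h1 h2
        have hxv : x ≠ v := by
          rintro rfl
          exact h1 ((hmemN w1).mpr a1)
        have hxR : x ∈ R := (hmemR x).mpr ⟨hxv, fun h => hx ((hmemN x).mpr h)⟩
        have hw1R : w1 ∈ R := by
          rw [hmemR]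
          refine ⟨fun h => ?_, fun h => h1 ((hmemN w1).mpr h)⟩
          subst h
          exact hx ((hmemN x).mpr a1.symm)
        have hw2R : w2 ∈ R := by
          rw [hmemR]
          refine ⟨fun h => ?_, fun h => h2 ((hmemN w2).mpr h)⟩
          subst h
          exact hx ((hmemN x).mpr a2.symm)
        by_contra hne
        exact hB x hxR w1 hw1R w2 hw2R hne a1 a2
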